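/- Let K be a field of characteristic 2 and let 𝒜 be the minimal strictly unital A∞-algebra over K with basis {1, a₀, b₁,…,b₆}, |a₀| = 2, |bᵢ| = 0, whose only nontrivial products are μ²(b₁,b₄) = μ²(b₂,b₅) = μ²(b₆,b₃) = μ²(b₄,b₁) = μ²(b₅,b₂) = μ²(b₃,b₆) = a₀, μ³ = 0, and μ⁴(b₄,b₁,b₂,b₅) = μ⁴(b₅,b₂,b₄,b₁) = μ⁴(b₅,b₂,b₅,b₂) = a₀ (all other μ⁴ on basis quadruples vanish). Then there is no A∞-quasi-isomorphism from 𝒜 to the cohomology algebra H*(S; K) of any closed orientable surface S (regarded as a minimal A∞-algebra with μ² the cup product and μ^d = 0 for d ≥ 3). -/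

import Mathlib

namespace Stmt13

variable (K : Type*) [Field K]

/-- Underlying space of the minimal strictly unital A∞-algebra `𝒜` over a field of
characteristic 2: basis `Fin 8` with `0 ↦ 1` (strict unit, degree 0), `1 ↦ a₀`
(degree 2), `2,…,7 ↦ b₁,…,b₆` (degree 0). -/
abbrev V (K : Type*) [Field K] : Type _ := Fin 8 → K

def e (g : Fin 8) : V K := Pi.single g 1

/-- `μ²`-structure constants (characteristic 2): `μ²(b₁,b₄) = μ²(b₂,b₅) = μ²(b₆,b₃) =
μ²(b₄,b₁) = μ²(b₅,b₂) = μ²(b₃,b₆) = a₀`, all other products of `b`'s zero. -/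
def c (i j : Fin 8) : K :=
  if (i, j) = (2, 5) ∨ (i, j) = (3, 6) ∨ (i, j) = (7, 4) ∨
     (i, j) = (5, 2) ∨ (i, j) = (6, 3) ∨ (i, j) = (4, 7) then 1 else 0

/-- The strictly unital product `μ²` of `𝒜`, bilinear by construction. -/
def mu2 (v w : V K) : V K :=
  v 0 • w + w 0 • v - (v 0 * w 0) • e K 0 +
    (∑ i : Fin 8, ∑ j : Fin 8, c K i j * v i * w j) • e K 1

/-- `μ⁴` on basis quadruples: `μ⁴(b₄,b₁,b₂,b₅) = μ⁴(b₅,b₂,b₄,b₁) = μ⁴(b₅,b₂,b₅,b₂) = a₀`,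
all other `μ⁴` on basis quadruples vanish (`μ³ = 0` and `μ^d = 0` for `d ∉ {2,4}`). -/
def mu4 (i j k l : Fin 8) : V K :=
  if (i, j, k, l) = (5, 2, 3, 6) ∨ (i, j, k, l) = (6, 3, 5, 2) ∨
     (i, j, k, l) = (6, 3, 6, 3) then e K 1 else 0

lemma e_apply_self (i : Fin 8) : e K i i = 1 := Pi.single_eq_same i 1

lemma e_apply_ne {i t : Fin 8} (h : t ≠ i) : e K i t = 0 := Pi.single_eq_of_ne h 1

lemma mu2_ee (i j : Fin 8) (hi : i ≠ 0) (hj : j ≠ 0) :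
    mu2 K (e K i) (e K j) = c K i j • e K 1 := by
  unfold mu2
  have hi0 : e K i 0 = 0 := e_apply_ne K (Ne.symm hi)
  have hj0 : e K j 0 = 0 := e_apply_ne K (Ne.symm hj)
  have hs : (∑ a : Fin 8, ∑ t : Fin 8, c K a t * e K i a * e K j t) = c K i j := by
    have h1 : ∀ a : Fin 8, a ≠ i → (∑ t : Fin 8, c K a t * e K i a * e K j t) = 0 := by
      intro a ha
      apply Finset.sum_eq_zero
      intro t _
      rw [e_apply_ne K ha, mul_zero, zero_mul]
    rw [Fintype.sum_eq_single i h1]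
    have h2 : ∀ t : Fin 8, t ≠ j → c K i t * e K i i * e K j t = 0 := by
      intro t ht
      rw [e_apply_ne K ht, mul_zero]
    rw [Fintype.sum_eq_single j h2, e_apply_self, e_apply_self, mul_one, mul_one]
  rw [hi0, hj0, hs]
  simp

lemma sum_mu2_smul {M : Type*} [AddCommMonoid M] [Module K M] (i j : Fin 8)
    (hi : i ≠ 0) (hj : j ≠ 0) (X : Fin 8 → M) :
    (∑ t : Fin 8, mu2 K (e K i) (e K j) t • X t) = c K i j • X 1 := by
  rw [mu2_ee K i j hi hj]
  have h1 : ∀ t : Fin 8, t ≠ 1 → (c K i j • e K 1 : V K) t • X t = 0 := by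
    intro t ht
    rw [Pi.smul_apply, e_apply_ne K ht, smul_zero, zero_smul]
  rw [Fintype.sum_eq_single 1 h1, Pi.smul_apply, e_apply_self, smul_eq_mul, mul_one]

/-- over a field `K` of characteristic 2 there is no A∞-quasi-isomorphism
from `𝒜` to the cohomology algebra `H = H*(S;K)` of any closed orientable surface `S`
(of any genus `g`, with its basis `1, φ₁,ψ₁,…,φ_g,ψ_g, ν` and cup product, viewed as a
minimal A∞-algebra with `μ^d = 0` for `d ≥ 3`): there is no strictly unital family
`(F¹, F², F³, …)` satisfying the A∞-functor equations (for minimal source and target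
with `μ³_𝒜 = 0` these are, in the relevant arities `d = 2, 3, 4`, the equations listed
below, `F^d` extended multilinearly) with `F¹` bijective. -/
theorem stmt_13 (hK : CharP K 2) (H : Type*) [Ring H] [Algebra K H]
    (g : ℕ) (φ ψ : Fin g → H) (ν : H)
    (b : Module.Basis (Unit ⊕ (Fin g ⊕ Fin g) ⊕ Unit) K H)
    (hb1 : b (Sum.inl ()) = 1)
    (hbφ : ∀ j, b (Sum.inr (Sum.inl (Sum.inl j))) = φ j)
    (hbψ : ∀ j, b (Sum.inr (Sum.inl (Sum.inr j))) = ψ j)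
    (hbν : b (Sum.inr (Sum.inr ())) = ν)
    (hφψ : ∀ j, φ j * ψ j = ν) (hψφ : ∀ j, ψ j * φ j = -ν)
    (hφφ : ∀ i j, φ i * φ j = 0) (hψψ : ∀ i j, ψ i * ψ j = 0)
    (hφψ' : ∀ i j, i ≠ j → φ i * ψ j = 0) (hψφ' : ∀ i j, i ≠ j → ψ i * φ j = 0)
    (hφν : ∀ i, φ i * ν = 0 ∧ ν * φ i = 0) (hψν : ∀ i, ψ i * ν = 0 ∧ ν * ψ i = 0)
    (hνν : ν * ν = 0) :
    ¬ ∃ (F1 : V K →ₗ[K] H) (F2 : Fin 8 → Fin 8 → H) (F3 : Fin 8 → Fin 8 → Fin 8 → H),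
      -- strict unitality of the A∞-morphism
      F1 (e K 0) = 1 ∧
      (∀ j : Fin 8, F2 0 j = 0 ∧ F2 j 0 = 0) ∧
      (∀ i j k : Fin 8, i = 0 ∨ j = 0 ∨ k = 0 → F3 i j k = 0) ∧
      -- the arity-2 A∞-functor equation (both sides minimal)
      (∀ i j : Fin 8, F1 (mu2 K (e K i) (e K j)) = F1 (e K i) * F1 (e K j)) ∧
      -- the arity-3 A∞-functor equation (μ³_𝒜 = 0, μ³_H = 0, characteristic 2)
      (∀ i j k : Fin 8,
        F2 i j * F1 (e K k) + F1 (e K i) * F2 j k +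
          (∑ t : Fin 8, mu2 K (e K i) (e K j) t • F2 t k) +
          (∑ t : Fin 8, mu2 K (e K j) (e K k) t • F2 i t) = 0) ∧
      -- the arity-4 A∞-functor equation
      (∀ i j k l : Fin 8,
        F1 (mu4 K i j k l) =
          F3 i j k * F1 (e K l) + F1 (e K i) * F3 j k l + F2 i j * F2 k l +
          (∑ t : Fin 8, mu2 K (e K i) (e K j) t • F3 t k l) +
          (∑ t : Fin 8, mu2 K (e K j) (e K k) t • F3 i t l) +
          (∑ t : Fin 8, mu2 K (e K k) (e K l) t • F3 i j t)) ∧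
      -- quasi-isomorphism between minimal A∞-algebras: `F¹` is an isomorphism
      Function.Bijective F1 := by
  haveI := hK
  rintro ⟨F1, F2, F3, -, -, -, heq2, -, heq4, hbij⟩
  classical
  -- characteristic-2 facts
  have h2K : (2 : K) = 0 := by exact_mod_cast CharP.cast_eq_zero K 2
  have htwo2 : ∀ x : H, x + x = 0 := by
    intro x
    rw [← two_smul K x, h2K, zero_smul]
  have hneg : ∀ x : H, -x = x := fun x => neg_eq_of_add_eq_zero_left (htwo2 x)
  have h2H : (2 : H) = 0 := by
    rw [show (2 : H) = 1 + 1 from one_add_one_eq_two.symm]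
    exact htwo2 1
  -- commutativity of H
  have hbb : ∀ i j, b i * b j = b j * b i := by
    rintro (⟨⟩ | (a | a) | ⟨⟩) (⟨⟩ | (a' | a') | ⟨⟩) <;>
      simp only [hb1, hbφ, hbψ, hbν, one_mul, mul_one, hφφ, hψψ, hνν]
    · rcases eq_or_ne a a' with rfl | h
      · rw [hφψ, hψφ]; exact (hneg ν).symm
      · rw [hφψ' _ _ h, hψφ' _ _ h.symm]
    · rw [(hφν a).1, (hφν a).2]
    · rcases eq_or_ne a a' with rfl | h
      · rw [hψφ, hφψ]; exact hneg ν
      · rw [hψφ' _ _ h, hφψ' _ _ h.symm]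
    · rw [(hψν a).1, (hψν a).2]
    · rw [(hφν a').2, (hφν a').1]
    · rw [(hψν a').2, (hψν a').1]
  have hcomm1 : ∀ (i) (y : H), b i * y = y * b i := by
    intro i y
    rw [← b.sum_repr y]
    refine Finset.sum_induction _ (fun z => b i * z = z * b i)
      (fun u v hu hv => ?_) (by simp) ?_
    · rw [mul_add, add_mul, hu, hv]
    · intro j _
      rw [mul_smul_comm, smul_mul_assoc, hbb i j]
  have hcomm : ∀ x y : H, x * y = y * x := by
    intro x y
    rw [← b.sum_repr x]
    refine Finset.sum_induction _ (fun z => z * y = y * z)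
      (fun u v hu hv => ?_) (by simp) ?_
    · rw [add_mul, mul_add, hu, hv]
    · intro j _
      rw [smul_mul_assoc, mul_smul_comm, hcomm1 j y]
  letI : CommRing H := { (inferInstance : Ring H) with mul_comm := hcomm }
  -- every square lies in K • 1
  have hsq : ∀ x : H, ∃ s : K, x * x = s • (1 : H) := by
    intro x
    refine b.sum_repr x ▸ Finset.sum_induction _ (fun z => ∃ s : K, z * z = s • (1 : H))
      ?_ ⟨0, by simp⟩ ?_
    · rintro u v ⟨su, hu⟩ ⟨sv, hv⟩
      refine ⟨su + sv, ?_⟩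
      have hx : (u + v) * (u + v) = u * u + (u * v + v * u) + v * v := by ring
      rw [hx, hcomm v u, htwo2 (u * v), add_zero, hu, hv, add_smul]
    · rintro (⟨⟩ | (a | a) | ⟨⟩) -
      · exact ⟨b.repr x (Sum.inl ()) * b.repr x (Sum.inl ()),
          by rw [smul_mul_smul, hb1, one_mul]⟩
      · exact ⟨0, by rw [smul_mul_smul, hbφ, hφφ, smul_zero, zero_smul]⟩
      · exact ⟨0, by rw [smul_mul_smul, hbψ, hψψ, smul_zero, zero_smul]⟩
      · exact ⟨0, by rw [smul_mul_smul, hbν, hνν, smul_zero, zero_smul]⟩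
  -- structure constants
  have c22 : c K 2 2 = (0:K) := by unfold c; exact if_neg (by decide)
  have c23 : c K 2 3 = (0:K) := by unfold c; exact if_neg (by decide)
  have c26 : c K 2 6 = (0:K) := by unfold c; exact if_neg (by decide)
  have c35 : c K 3 5 = (0:K) := by unfold c; exact if_neg (by decide)
  have c65 : c K 6 5 = (0:K) := by unfold c; exact if_neg (by decide)
  have c36 : c K 3 6 = (1:K) := by unfold c; exact if_pos (by decide)
  have c52 : c K 5 2 = (1:K) := by unfold c; exact if_pos (by decide)
  have c63 : c K 6 3 = (1:K) := by unfold c; exact if_pos (by decide)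
  have m1 : mu4 K 2 3 6 5 = 0 := by unfold mu4; exact if_neg (by decide)
  have m2 : mu4 K 3 6 5 2 = 0 := by unfold mu4; exact if_neg (by decide)
  have m3 : mu4 K 6 5 2 3 = 0 := by unfold mu4; exact if_neg (by decide)
  have m4 : mu4 K 5 2 3 6 = e K 1 := by unfold mu4; exact if_pos (by decide)
  have m5 : mu4 K 2 6 3 5 = 0 := by unfold mu4; exact if_neg (by decide)
  have m6 : mu4 K 6 3 5 2 = e K 1 := by unfold mu4; exact if_pos (by decide)
  have m7 : mu4 K 3 5 2 6 = 0 := by unfold mu4; exact if_neg (by decide)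
  have m8 : mu4 K 5 2 6 3 = 0 := by unfold mu4; exact if_neg (by decide)
  have m9 : mu4 K 3 6 3 6 = 0 := by unfold mu4; exact if_neg (by decide)
  have m10 : mu4 K 6 3 6 3 = e K 1 := by unfold mu4; exact if_pos (by decide)
  -- the ten arity-4 equations
  have E1 := heq4 2 3 6 5
  rw [sum_mu2_smul K 2 3 (by decide) (by decide), sum_mu2_smul K 3 6 (by decide) (by decide),
      sum_mu2_smul K 6 5 (by decide) (by decide), m1, map_zero] at E1
  have E2 := heq4 3 6 5 2
  rw [sum_mu2_smul K 3 6 (by decide) (by decide), sum_mu2_smul K 6 5 (by decide) (by decide),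
      sum_mu2_smul K 5 2 (by decide) (by decide), m2, map_zero] at E2
  have E3 := heq4 6 5 2 3
  rw [sum_mu2_smul K 6 5 (by decide) (by decide), sum_mu2_smul K 5 2 (by decide) (by decide),
      sum_mu2_smul K 2 3 (by decide) (by decide), m3, map_zero] at E3
  have E4 := heq4 5 2 3 6
  rw [sum_mu2_smul K 5 2 (by decide) (by decide), sum_mu2_smul K 2 3 (by decide) (by decide),
      sum_mu2_smul K 3 6 (by decide) (by decide), m4] at E4
  have E5 := heq4 2 6 3 5
  rw [sum_mu2_smul K 2 6 (by decide) (by decide), sum_mu2_smul K 6 3 (by decide) (by decide),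
      sum_mu2_smul K 3 5 (by decide) (by decide), m5, map_zero] at E5
  have E6 := heq4 6 3 5 2
  rw [sum_mu2_smul K 6 3 (by decide) (by decide), sum_mu2_smul K 3 5 (by decide) (by decide),
      sum_mu2_smul K 5 2 (by decide) (by decide), m6] at E6
  have E7 := heq4 3 5 2 6
  rw [sum_mu2_smul K 3 5 (by decide) (by decide), sum_mu2_smul K 5 2 (by decide) (by decide),
      sum_mu2_smul K 2 6 (by decide) (by decide), m7, map_zero] at E7
  have E8 := heq4 5 2 6 3
  rw [sum_mu2_smul K 5 2 (by decide) (by decide), sum_mu2_smul K 2 6 (by decide) (by decide),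
      sum_mu2_smul K 6 3 (by decide) (by decide), m8, map_zero] at E8
  have E9 := heq4 3 6 3 6
  rw [sum_mu2_smul K 3 6 (by decide) (by decide), sum_mu2_smul K 6 3 (by decide) (by decide),
      sum_mu2_smul K 3 6 (by decide) (by decide), m9, map_zero] at E9
  have E10 := heq4 6 3 6 3
  rw [sum_mu2_smul K 6 3 (by decide) (by decide), sum_mu2_smul K 3 6 (by decide) (by decide),
      sum_mu2_smul K 6 3 (by decide) (by decide), m10] at E10
  simp only [c22, c23, c26, c35, c65, c36, c52, c63, zero_smul, one_smul, add_zero,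
    zero_add] at E1 E2 E3 E4 E5 E6 E7 E8 E9 E10
  -- arity-2 facts
  have h52 := heq2 5 2
  rw [mu2_ee K 5 2 (by decide) (by decide), map_smul, c52, one_smul] at h52
  have h22 := heq2 2 2
  rw [mu2_ee K 2 2 (by decide) (by decide), map_smul, c22, zero_smul] at h22
  -- F1 a₀ ≠ 0
  have hA0 : F1 (e K 1) ≠ 0 := by
    intro h0
    have he : e K 1 = 0 := hbij.1 (by rw [h0, map_zero])
    have h1 : (1 : K) = 0 := by simpa [e] using congrFun he 1
    exact one_ne_zero h1
  -- summing the ten equations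
  have hA' : F1 (e K 1) = F2 3 6 * F2 3 6 + F2 6 3 * F2 6 3 := by
    linear_combination (norm := ring_nf) E1 + E2 + E3 + E4 + E5 + E6 + E7 + E8 + E9 + E10 +
      (F3 2 3 6 * F1 (e K 5) + F3 3 6 5 * F1 (e K 2) + F3 6 5 2 * F1 (e K 3) +
       F3 5 2 3 * F1 (e K 6) + F3 2 6 3 * F1 (e K 5) + F3 6 3 5 * F1 (e K 2) +
       F3 3 5 2 * F1 (e K 6) + F3 5 2 6 * F1 (e K 3) + F3 3 6 3 * F1 (e K 6) +
       F3 6 3 6 * F1 (e K 3) + F2 2 3 * F2 6 5 + F2 3 6 * F2 5 2 + F2 2 6 * F2 3 5 +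
       F2 6 3 * F2 5 2 + F3 2 1 5 + F3 1 5 2 + F3 3 6 1 + F3 6 1 3 + F3 1 3 6 +
       F3 5 2 1 + F3 6 3 1 + F3 3 1 6 + F3 1 6 3 - F1 (e K 1)) * h2H
  obtain ⟨s, hs2⟩ := hsq (F2 3 6 + F2 6 3)
  have hsum : F2 3 6 * F2 3 6 + F2 6 3 * F2 6 3 = (F2 3 6 + F2 6 3) * (F2 3 6 + F2 6 3) := by
    linear_combination -htwo2 (F2 3 6 * F2 6 3)
  have hA1 : F1 (e K 1) = s • (1 : H) := by rw [hA', hsum, hs2]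
  have hAA : F1 (e K 1) * F1 (e K 1) = 0 := by
    rw [h52]
    linear_combination (F1 (e K 5) * F1 (e K 5)) * h22.symm
  have hss : (s * s) • (1 : H) = 0 := by
    calc (s * s) • (1 : H) = (s • (1 : H)) * (s • (1 : H)) := by rw [smul_mul_smul, mul_one]
      _ = F1 (e K 1) * F1 (e K 1) := by rw [← hA1]
      _ = 0 := hAA
  by_cases hs0 : s = 0
  · exact hA0 (by rw [hA1, hs0, zero_smul])
  · have h1H : (1 : H) = 0 := by
      have hinv := congrArg (fun z => (s * s)⁻¹ • z) hss
      simp only [smul_smul, inv_mul_cancel₀ (mul_ne_zero hs0 hs0), one_smul, smul_zero] at hinv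
      exact hinv
    exact hA0 (by rw [hA1, h1H, smul_zero])


end Stmt13
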